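/- Conditional version of the differential-effect identity: under consistency, unconfoundedness given (X, Z2, U), and exclusion restriction, for (almost every) x with P(Z1=1,Z2=0|X=x) > 0 and P(Z1=0,Z2=1|X=x) > 0: μ1(x) := E[Y|Z1=1,Z2=0,X=x] − E[Y|Z1=0,Z2=1,X=x] = τ(x) + h(1,0,x) − h(0,1,x), where τ(x) = E[Y(1)−Y(0)|X=x] and h(a,b,x) = E[f_a(X,U)|Z1=a,Z2=b,X=x] with f_a(X,U) = E[Y(a)|X,U] − E[Y(a)|X]. -/

import Mathlib

set_option linter.unusedSectionVars false
set_option maxHeartbeats 1000000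


open MeasureTheory ProbabilityTheory

/-- Conditional mean of `f` given the event `A`: `E[f | A]`. -/
noncomputable def condMeanOn {Ω : Type*} [MeasurableSpace Ω]
    (μ : Measure Ω) (A : Set Ω) (f : Ω → ℝ) : ℝ :=
  (∫ ω in A, f ω ∂μ) / (μ A).toReal

/-- The σ-algebra generated by two real-valued functions, e.g. `σ(X, U)`. -/
def sigma2 {Ω : Type*} (f g : Ω → ℝ) : MeasurableSpace Ω :=
  MeasurableSpace.comap f inferInstance ⊔ MeasurableSpace.comap g inferInstance

/-- The σ-algebra generated by three real-valued functions, e.g. `σ(Z2, X, U)`. -/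
def sigma3 {Ω : Type*} (f g h : Ω → ℝ) : MeasurableSpace Ω :=
  MeasurableSpace.comap f inferInstance ⊔ MeasurableSpace.comap g inferInstance
    ⊔ MeasurableSpace.comap h inferInstance

section AuxLemmas

open Filter

section Pre
variable {Ω : Type*} {mΩ : MeasurableSpace Ω} [StandardBorelSpace Ω]
  {μ : Measure Ω} [IsProbabilityMeasure μ]

/-- integrable times bounded (bounded on the right) -/
lemma MeasureTheory.Integrable.mul_bdd' {f g : Ω → ℝ} {c : ℝ} (hf : Integrable f μ)
    (hg : AEStronglyMeasurable g μ) (hb : ∀ᵐ ω ∂μ, ‖g ω‖ ≤ c) :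
    Integrable (fun ω => f ω * g ω) μ := by
  simpa [mul_comm] using hf.bdd_mul hg hb

lemma binary_indicator {W : Ω → ℝ} (hWbin : ∀ ω, W ω = 0 ∨ W ω = 1) :
    W = Set.indicator {ω | W ω = 1} (fun _ => (1:ℝ)) := by
  funext ω
  rcases hWbin ω with h | h <;> simp [Set.indicator_apply, h]

lemma mul_binary_indicator {W : Ω → ℝ} (hWbin : ∀ ω, W ω = 0 ∨ W ω = 1) (g : Ω → ℝ) (ω : Ω) :
    g ω * W ω = Set.indicator {ω | W ω = 1} g ω := by
  rcases hWbin ω with h | h <;> simp [Set.indicator_apply, h]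

lemma setIntegral_mul_binary {W : Ω → ℝ} (hW : Measurable W)
    (hWbin : ∀ ω, W ω = 0 ∨ W ω = 1) (g : Ω → ℝ) {B : Set Ω} (hB : MeasurableSet B) :
    ∫ ω in B, g ω * W ω ∂μ = ∫ ω in B ∩ {ω | W ω = 1}, g ω ∂μ := by
  have hT : MeasurableSet {ω | W ω = 1} := hW (measurableSet_singleton 1)
  rw [← setIntegral_indicator hT]
  exact setIntegral_congr_fun hB fun ω _ => mul_binary_indicator hWbin g ω

lemma norm_le_one_of_binary {W : Ω → ℝ} (hWbin : ∀ ω, W ω = 0 ∨ W ω = 1) (ω : Ω) :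
    ‖W ω‖ ≤ 1 := by rcases hWbin ω with h | h <;> simp [h]

end Pre

section Main

variable {Ω : Type*} {m' : MeasurableSpace Ω} {mΩ : MeasurableSpace Ω} [StandardBorelSpace Ω]
  {μ : Measure Ω} [IsProbabilityMeasure μ]

/-- non-instance alias to avoid instance-resolution clashes -/
def mVd {Ω : Type*} (V : Ω → ℝ) : MeasurableSpace Ω := MeasurableSpace.comap V inferInstance

lemma setIntegral_mul_condIndep
    {hm' : m' ≤ mΩ}
    {V W : Ω → ℝ} (hV : Measurable V) (hW : Measurable W)
    (hWbin : ∀ ω, W ω = 0 ∨ W ω = 1)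
    (hVint : Integrable V μ)
    (hindep : CondIndepFun m' hm' V W μ)
    {B : Set Ω} (hB : MeasurableSet[m'] B) :
    ∫ ω in B, V ω * W ω ∂μ = ∫ ω in B, (μ[V|m']) ω * W ω ∂μ := by
  have hBm : MeasurableSet B := hm' _ hB
  have hmV : MeasurableSpace.comap V inferInstance ≤ mΩ := hV.comap_le
  have hVmV : @Measurable Ω ℝ (MeasurableSpace.comap V inferInstance) _ V :=
    fun s hs => ⟨s, hs, rfl⟩
  have hWnorm : ∀ ω, ‖W ω‖ ≤ 1 := norm_le_one_of_binary hWbin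
  have hWint : Integrable W μ :=
    Integrable.mono' (integrable_const 1) hW.aestronglyMeasurable (ae_of_all _ hWnorm)
  have hcW_meas : AEStronglyMeasurable (μ[W|m']) μ :=
    (stronglyMeasurable_condExp.mono hm').aestronglyMeasurable
  have hcW_bound : ∀ᵐ ω ∂μ, ‖(μ[W|m']) ω‖ ≤ 1 := by
    have h0 : (0 : Ω → ℝ) ≤ᵐ[μ] μ[W|m'] :=
      condExp_nonneg (ae_of_all _ fun ω => by rcases hWbin ω with h | h <;> simp [h])
    have h1 : μ[W|m'] ≤ᵐ[μ] μ[fun _ => (1:ℝ)|m'] :=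
      condExp_mono hWint (integrable_const 1)
        (ae_of_all _ fun ω => by rcases hWbin ω with h | h <;> simp [h])
    rw [condExp_const hm'] at h1
    filter_upwards [h0, h1] with ω hω0 hω1
    simp only [Pi.zero_apply] at hω0
    rw [Real.norm_eq_abs, abs_le]
    exact ⟨by linarith, hω1⟩
  -- Step A: indicators of comap-V-measurable sets
  have stepA : ∀ s : Set Ω, MeasurableSet[MeasurableSpace.comap V inferInstance] s →
      ∫ ω in B, Set.indicator s (fun _ => (1:ℝ)) ω * W ω ∂μ
        = ∫ ω in B, (μ[Set.indicator s (fun _ => (1:ℝ))|m']) ω * (μ[W|m']) ω ∂μ := by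
    intro s hs
    have hsm : MeasurableSet s := hmV s hs
    have hTm : MeasurableSet {ω | W ω = 1} := hW (measurableSet_singleton 1)
    have hT' : MeasurableSet[MeasurableSpace.comap W inferInstance] {ω | W ω = 1} :=
      ⟨{1}, measurableSet_singleton 1, rfl⟩
    have hmul := (condIndepFun_iff m' hm' V W hV hW μ).mp hindep s {ω | W ω = 1} hs hT'
    have hWT : μ[W|m'] =ᵐ[μ] μ[Set.indicator {ω | W ω = 1} (fun _ => (1:ℝ))|m'] :=
      condExp_congr_ae (Filter.EventuallyEq.of_eq (binary_indicator hWbin))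
    have hpt : ∀ ω, Set.indicator s (fun _ => (1:ℝ)) ω * W ω
        = Set.indicator (s ∩ {ω | W ω = 1}) (fun _ => (1:ℝ)) ω := by
      intro ω
      rcases hWbin ω with h | h <;> by_cases hss : ω ∈ s <;>
        simp [Set.indicator_apply, h, hss, Set.mem_setOf_eq]
    have hint : Integrable (Set.indicator (s ∩ {ω | W ω = 1}) (fun _ => (1:ℝ))) μ :=
      (integrable_const 1).indicator (hsm.inter hTm)
    calc ∫ ω in B, Set.indicator s (fun _ => (1:ℝ)) ω * W ω ∂μ
        = ∫ ω in B, Set.indicator (s ∩ {ω | W ω = 1}) (fun _ => (1:ℝ)) ω ∂μ := by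
          exact setIntegral_congr_fun hBm fun ω _ => hpt ω
      _ = ∫ ω in B, (μ[Set.indicator (s ∩ {ω | W ω = 1}) (fun _ => (1:ℝ))|m']) ω ∂μ :=
          (setIntegral_condExp hm' hint hB).symm
      _ = ∫ ω in B, ((μ[Set.indicator s (fun _ => (1:ℝ))|m']) * (μ[Set.indicator {ω | W ω = 1} (fun _ => (1:ℝ))|m'])) ω ∂μ :=
          integral_congr_ae (ae_restrict_of_ae hmul)
      _ = ∫ ω in B, (μ[Set.indicator s (fun _ => (1:ℝ))|m']) ω * (μ[W|m']) ω ∂μ := by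
          refine integral_congr_ae (ae_restrict_of_ae ?_)
          filter_upwards [hWT] with ω h
          simp [Pi.mul_apply, h]
  -- integrability helpers
  have hsf_int : ∀ φ : @SimpleFunc Ω (mVd V) ℝ, Integrable (⇑φ) μ := by
    intro φ
    obtain ⟨C, hC⟩ := @SimpleFunc.exists_forall_norm_le Ω ℝ (mVd V) _ φ
    exact Integrable.mono' (integrable_const C)
      ((@SimpleFunc.measurable Ω ℝ (mVd V) _ φ).mono hmV le_rfl).aestronglyMeasurable
      (ae_of_all _ hC)
  -- Step B: simple functions w.r.t. comap V
  have stepB : ∀ φ : @SimpleFunc Ω (mVd V) ℝ,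
      ∫ ω in B, φ ω * W ω ∂μ = ∫ ω in B, (μ[⇑φ|m']) ω * (μ[W|m']) ω ∂μ := by
    intro φ
    refine @SimpleFunc.induction Ω ℝ (mVd V) _
      (fun ψ => ∫ ω in B, ψ ω * W ω ∂μ = ∫ ω in B, (μ[⇑ψ|m']) ω * (μ[W|m']) ω ∂μ)
      ?_ ?_ φ
    · intro c s hs
      have hco : ⇑(@SimpleFunc.piecewise Ω ℝ (mVd V) s hs (@SimpleFunc.const Ω ℝ (mVd V) c)
            (@SimpleFunc.const Ω ℝ (mVd V) 0))
          = fun ω => c * Set.indicator s (fun _ => (1:ℝ)) ω := by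
        funext ω
        by_cases hss : ω ∈ s <;>
          simp [SimpleFunc.piecewise_apply, Set.indicator_apply, hss]
      rw [hco]
      have hsmul : (fun ω => c * Set.indicator s (fun _ => (1:ℝ)) ω)
          = c • Set.indicator s (fun _ => (1:ℝ)) := by
        funext ω; simp [smul_eq_mul]
      calc ∫ ω in B, (c * Set.indicator s (fun _ => (1:ℝ)) ω) * W ω ∂μ
          = c * ∫ ω in B, Set.indicator s (fun _ => (1:ℝ)) ω * W ω ∂μ := by
            simp_rw [mul_assoc]; exact integral_const_mul c _
        _ = c * ∫ ω in B, (μ[Set.indicator s (fun _ => (1:ℝ))|m']) ω * (μ[W|m']) ω ∂μ := by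
            rw [stepA s hs]
        _ = ∫ ω in B, c * ((μ[Set.indicator s (fun _ => (1:ℝ))|m']) ω * (μ[W|m']) ω) ∂μ :=
            (integral_const_mul c _).symm
        _ = ∫ ω in B, (μ[fun ω => c * Set.indicator s (fun _ => (1:ℝ)) ω|m']) ω * (μ[W|m']) ω ∂μ := by
            refine integral_congr_ae (ae_restrict_of_ae ?_)
            have hc := condExp_smul (μ := μ) (m := m') c (Set.indicator s (fun _ => (1:ℝ)))
            rw [hsmul]
            filter_upwards [hc] with ω h
            simp only [Pi.smul_apply, smul_eq_mul] at h
            rw [h]; ring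
    · intro f g _ hf hg
      have hfint := hsf_int f
      have hgint := hsf_int g
      have hfW : Integrable (fun ω => f ω * W ω) μ :=
        hfint.mul_bdd' hW.aestronglyMeasurable (ae_of_all _ hWnorm)
      have hgW : Integrable (fun ω => g ω * W ω) μ :=
        hgint.mul_bdd' hW.aestronglyMeasurable (ae_of_all _ hWnorm)
      have hfc : Integrable (fun ω => (μ[⇑f|m']) ω * (μ[W|m']) ω) μ :=
        integrable_condExp.mul_bdd' hcW_meas hcW_bound
      have hgc : Integrable (fun ω => (μ[⇑g|m']) ω * (μ[W|m']) ω) μ :=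
        integrable_condExp.mul_bdd' hcW_meas hcW_bound
      have hco : ⇑(f + g) = fun ω => f ω + g ω := rfl
      rw [hco]
      calc ∫ ω in B, (f ω + g ω) * W ω ∂μ
          = ∫ ω in B, (f ω * W ω + g ω * W ω) ∂μ := by simp_rw [add_mul]
        _ = (∫ ω in B, f ω * W ω ∂μ) + ∫ ω in B, g ω * W ω ∂μ :=
            integral_add hfW.integrableOn hgW.integrableOn
        _ = (∫ ω in B, (μ[⇑f|m']) ω * (μ[W|m']) ω ∂μ)
              + ∫ ω in B, (μ[⇑g|m']) ω * (μ[W|m']) ω ∂μ := by rw [hf, hg]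
        _ = ∫ ω in B, ((μ[⇑f|m']) ω * (μ[W|m']) ω + (μ[⇑g|m']) ω * (μ[W|m']) ω) ∂μ :=
            (integral_add hfc.integrableOn hgc.integrableOn).symm
        _ = ∫ ω in B, (μ[fun ω => f ω + g ω|m']) ω * (μ[W|m']) ω ∂μ := by
            refine integral_congr_ae (ae_restrict_of_ae ?_)
            have hadd := condExp_add (μ := μ) (m := m') hfint hgint
            filter_upwards [hadd] with ω h
            have hco2 : (fun ω => f ω + g ω) = ⇑f + ⇑g := rfl
            rw [hco2, h]
            simp [add_mul]
  -- Step C: approximation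
  have hVmV' : @Measurable Ω ℝ (mVd V) _ V := fun s hs => ⟨s, hs, rfl⟩
  let φ : ℕ → @SimpleFunc Ω (mVd V) ℝ := fun n =>
    @SimpleFunc.approxOn ℝ Ω _ _ _ (mVd V) V hVmV' Set.univ 0 (Set.mem_univ 0) _ n
  have hφ_tendsto : ∀ ω, Filter.Tendsto (fun n => φ n ω) Filter.atTop (nhds (V ω)) := by
    intro ω
    exact @SimpleFunc.tendsto_approxOn ℝ Ω _ _ _ (mVd V) V hVmV' Set.univ 0 (Set.mem_univ 0) _ ω
      (by simp)
  have hφ_le : ∀ n ω, ‖φ n ω‖ ≤ 2 * ‖V ω‖ := by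
    intro n ω
    have h := @SimpleFunc.edist_approxOn_y0_le ℝ Ω _ _ _ (mVd V) V hVmV' Set.univ 0
      (Set.mem_univ 0) _ ω n
    have h2 : ‖φ n ω‖ ≤ ‖V ω‖ + ‖V ω‖ := by
      simp only [edist_comm (0:ℝ), edist_zero_right] at h
      rw [← ofReal_norm_eq_enorm, ← ofReal_norm_eq_enorm,
        ← ENNReal.ofReal_add (norm_nonneg _) (norm_nonneg _)] at h
      exact (ENNReal.ofReal_le_ofReal_iff (by positivity)).mp h
    linarith [h2]
  have hφ_meas : ∀ n, Measurable (⇑(φ n)) :=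
    fun n => (@SimpleFunc.measurable Ω ℝ (mVd V) _ (φ n)).mono hmV le_rfl
  have hφ_int : ∀ n, Integrable (⇑(φ n)) μ := fun n => hsf_int (φ n)
  -- the LHS tendsto
  have hL : Filter.Tendsto (fun n => ∫ ω in B, φ n ω * W ω ∂μ) Filter.atTop
      (nhds (∫ ω in B, V ω * W ω ∂μ)) := by
    refine tendsto_integral_of_dominated_convergence (fun ω => 2 * ‖V ω‖)
      (fun n => ((hφ_meas n).mul hW).aestronglyMeasurable)
      ((hVint.norm.const_mul 2).restrict) ?_ ?_
    · intro n
      refine ae_of_all _ fun ω => ?_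
      calc ‖φ n ω * W ω‖ = ‖φ n ω‖ * ‖W ω‖ := norm_mul _ _
        _ ≤ (2 * ‖V ω‖) * 1 := by
            exact mul_le_mul (hφ_le n ω) (hWnorm ω) (norm_nonneg _) (by positivity)
        _ = 2 * ‖V ω‖ := mul_one _
    · exact ae_of_all _ fun ω => (hφ_tendsto ω).mul_const (W ω)
  -- the RHS tendsto
  have hD : Filter.Tendsto (fun n => ∫ ω, ‖φ n ω - V ω‖ ∂μ) Filter.atTop (nhds 0) := by
    have h0 : (0:ℝ) = ∫ (_ : Ω), (0:ℝ) ∂μ := by simp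
    rw [h0]
    refine tendsto_integral_of_dominated_convergence (fun ω => 3 * ‖V ω‖)
      (fun n => ((hφ_meas n).sub hV).norm.aestronglyMeasurable)
      (hVint.norm.const_mul 3) ?_ ?_
    · intro n
      refine ae_of_all _ fun ω => ?_
      rw [norm_norm]
      calc ‖φ n ω - V ω‖ ≤ ‖φ n ω‖ + ‖V ω‖ := norm_sub_le _ _
        _ ≤ 2 * ‖V ω‖ + ‖V ω‖ := by linarith [hφ_le n ω]
        _ = 3 * ‖V ω‖ := by ring
    · refine ae_of_all _ fun ω => ?_
      have := ((hφ_tendsto ω).sub tendsto_const_nhds (g := fun _ => V ω))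
      have h2 : Filter.Tendsto (fun n => ‖φ n ω - V ω‖) Filter.atTop (nhds ‖V ω - V ω‖) :=
        this.norm
      simpa using h2
  have hR : Filter.Tendsto (fun n => ∫ ω in B, (μ[⇑(φ n)|m']) ω * (μ[W|m']) ω ∂μ)
      Filter.atTop (nhds (∫ ω in B, (μ[V|m']) ω * (μ[W|m']) ω ∂μ)) := by
    rw [tendsto_iff_dist_tendsto_zero]
    refine squeeze_zero (fun n => dist_nonneg) (fun n => ?_) hD
    have hint1 : Integrable (fun ω => (μ[⇑(φ n)|m']) ω * (μ[W|m']) ω) μ :=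
      integrable_condExp.mul_bdd' hcW_meas hcW_bound
    have hint2 : Integrable (fun ω => (μ[V|m']) ω * (μ[W|m']) ω) μ :=
      integrable_condExp.mul_bdd' hcW_meas hcW_bound
    rw [Real.dist_eq, ← integral_sub hint1.integrableOn hint2.integrableOn]
    have hsub : ∀ᵐ ω ∂μ, (μ[⇑(φ n)|m']) ω * (μ[W|m']) ω - (μ[V|m']) ω * (μ[W|m']) ω
        = (μ[(fun ω => φ n ω - V ω)|m']) ω * (μ[W|m']) ω := by
      have hce := condExp_sub (μ := μ) (m := m') (hφ_int n) hVint
      filter_upwards [hce] with ω h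
      have : (fun ω => φ n ω - V ω) = ⇑(φ n) - V := rfl
      rw [this, h]
      simp [sub_mul]
    rw [integral_congr_ae (ae_restrict_of_ae hsub)]
    have step1 : ‖∫ ω in B, (μ[(fun ω => φ n ω - V ω)|m']) ω * (μ[W|m']) ω ∂μ‖
        ≤ ∫ ω in B, ‖(μ[(fun ω => φ n ω - V ω)|m']) ω * (μ[W|m']) ω‖ ∂μ :=
      norm_integral_le_integral_norm _
    have hint3 : Integrable (fun ω => (μ[(fun ω => φ n ω - V ω)|m']) ω * (μ[W|m']) ω) μ :=
      integrable_condExp.mul_bdd' hcW_meas hcW_bound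
    have step2 : ∫ ω in B, ‖(μ[(fun ω => φ n ω - V ω)|m']) ω * (μ[W|m']) ω‖ ∂μ
        ≤ ∫ ω in B, ‖(μ[(fun ω => φ n ω - V ω)|m']) ω‖ ∂μ := by
      refine integral_mono_ae hint3.norm.integrableOn integrable_condExp.norm.integrableOn ?_
      refine ae_restrict_of_ae ?_
      filter_upwards [hcW_bound] with ω h
      calc ‖(μ[(fun ω => φ n ω - V ω)|m']) ω * (μ[W|m']) ω‖
          = ‖(μ[(fun ω => φ n ω - V ω)|m']) ω‖ * ‖(μ[W|m']) ω‖ := norm_mul _ _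
        _ ≤ ‖(μ[(fun ω => φ n ω - V ω)|m']) ω‖ * 1 :=
            mul_le_mul_of_nonneg_left h (norm_nonneg _)
        _ = ‖(μ[(fun ω => φ n ω - V ω)|m']) ω‖ := mul_one _
    have step3 : ∫ ω in B, ‖(μ[(fun ω => φ n ω - V ω)|m']) ω‖ ∂μ
        ≤ ∫ ω, ‖(μ[(fun ω => φ n ω - V ω)|m']) ω‖ ∂μ :=
      setIntegral_le_integral integrable_condExp.norm (ae_of_all _ fun ω => norm_nonneg _)
    have step4 : ∫ ω, ‖(μ[(fun ω => φ n ω - V ω)|m']) ω‖ ∂μ ≤ ∫ ω, ‖φ n ω - V ω‖ ∂μ := by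
      simpa [Real.norm_eq_abs] using integral_abs_condExp_le (μ := μ) (m := m')
        (fun ω => φ n ω - V ω)
    rw [← Real.norm_eq_abs]
    exact le_trans step1 (le_trans step2 (le_trans step3 step4))
  -- combine
  have hL' : Filter.Tendsto (fun n => ∫ ω in B, φ n ω * W ω ∂μ) Filter.atTop
      (nhds (∫ ω in B, (μ[V|m']) ω * (μ[W|m']) ω ∂μ)) := by
    have : (fun n => ∫ ω in B, φ n ω * W ω ∂μ)
        = fun n => ∫ ω in B, (μ[⇑(φ n)|m']) ω * (μ[W|m']) ω ∂μ :=
      funext fun n => stepB (φ n)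
    rw [this]; exact hR
  have hmain : ∫ ω in B, V ω * W ω ∂μ = ∫ ω in B, (μ[V|m']) ω * (μ[W|m']) ω ∂μ :=
    tendsto_nhds_unique hL hL'
  -- pull-out property to replace μ[W|m'] by W
  have hprod_int : Integrable (fun ω => (μ[V|m']) ω * W ω) μ :=
    integrable_condExp.mul_bdd' hW.aestronglyMeasurable (ae_of_all _ hWnorm)
  have hpull : μ[(μ[V|m']) * W|m'] =ᵐ[μ] (μ[V|m']) * (μ[W|m']) :=
    condExp_mul_of_stronglyMeasurable_left stronglyMeasurable_condExp
      (by exact hprod_int) hWint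
  calc ∫ ω in B, V ω * W ω ∂μ
      = ∫ ω in B, (μ[V|m']) ω * (μ[W|m']) ω ∂μ := hmain
    _ = ∫ ω in B, (μ[(μ[V|m']) * W|m']) ω ∂μ := by
        refine (integral_congr_ae (ae_restrict_of_ae ?_))
        filter_upwards [hpull] with ω h
        rw [h]; simp
    _ = ∫ ω in B, ((μ[V|m']) * W) ω ∂μ :=
        setIntegral_condExp hm' (by exact hprod_int) hB
    _ = ∫ ω in B, (μ[V|m']) ω * W ω ∂μ := by simp [Pi.mul_apply]

/-- cell identity: on `B ∩ {W = 1}` the integral of `V` can be replaced by that of any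
a.e. version of `μ[V|m']`. -/
lemma cell_integral_eq
    {g : Ω → ℝ}
    {hm' : m' ≤ mΩ}
    {V W : Ω → ℝ} (hV : Measurable V) (hW : Measurable W)
    (hWbin : ∀ ω, W ω = 0 ∨ W ω = 1)
    (hVint : Integrable V μ)
    (hindep : CondIndepFun m' hm' V W μ)
    (hexcl : μ[V|m'] =ᵐ[μ] g)
    {B : Set Ω} (hB : MeasurableSet[m'] B) :
    ∫ ω in B ∩ {ω | W ω = 1}, V ω ∂μ = ∫ ω in B ∩ {ω | W ω = 1}, g ω ∂μ := by
  have hBm : MeasurableSet B := hm' _ hB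
  rw [← setIntegral_mul_binary hW hWbin V hBm, ← setIntegral_mul_binary hW hWbin g hBm]
  rw [setIntegral_mul_condIndep hV hW hWbin hVint hindep hB]
  refine integral_congr_ae (ae_restrict_of_ae ?_)
  filter_upwards [hexcl] with ω h
  rw [h]

end Main

section Aux

variable {Ω : Type*} {mΩ : MeasurableSpace Ω} {μ : Measure Ω} [IsProbabilityMeasure μ]

lemma comap_measurable_constant {X h : Ω → ℝ}
    (hh : @Measurable Ω ℝ (MeasurableSpace.comap X inferInstance) _ h)
    {ω ω' : Ω} (hxx : X ω = X ω') : h ω = h ω' := by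
  have hset : MeasurableSet[MeasurableSpace.comap X inferInstance] (h ⁻¹' {h ω}) :=
    hh (measurableSet_singleton _)
  obtain ⟨t, -, hpre⟩ := hset
  have hω : ω ∈ X ⁻¹' t := by rw [hpre]; exact rfl
  have hω' : ω' ∈ X ⁻¹' t := by
    simp only [Set.mem_preimage, ← hxx]; exact hω
  rw [hpre] at hω'
  exact (Set.mem_singleton_iff.mp hω').symm

lemma condMeanOn_sub {f g : Ω → ℝ} {S : Set Ω}
    (hf : IntegrableOn f S μ) (hg : IntegrableOn g S μ) :
    condMeanOn μ S (fun ω => f ω - g ω) = condMeanOn μ S f - condMeanOn μ S g := by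
  unfold condMeanOn
  rw [integral_sub hf hg, sub_div]

lemma condMeanOn_condexp_comap
    {X f : Ω → ℝ} (hX : Measurable X) (hf : Integrable f μ) {x : ℝ}
    (hx : μ {ω | X ω = x} ≠ 0) {S : Set Ω} (hS : S ⊆ {ω | X ω = x})
    (hSm : MeasurableSet S) (hSne : μ S ≠ 0) :
    condMeanOn μ S (μ[f | MeasurableSpace.comap X inferInstance])
      = condMeanOn μ {ω | X ω = x} f := by
  have hmX : MeasurableSpace.comap X inferInstance ≤ mΩ := hX.comap_le
  have hhm : @Measurable Ω ℝ (MeasurableSpace.comap X inferInstance) _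
      (μ[f | MeasurableSpace.comap X inferInstance]) :=
    stronglyMeasurable_condExp.measurable
  have hSx : MeasurableSet[MeasurableSpace.comap X inferInstance] {ω | X ω = x} :=
    ⟨{x}, measurableSet_singleton x, rfl⟩
  have hSxm : MeasurableSet {ω | X ω = x} := hmX _ hSx
  obtain ⟨ω0, hω0⟩ := nonempty_of_measure_ne_zero hx
  have hω0x : X ω0 = x := hω0
  have hconst : ∀ ω ∈ {ω | X ω = x},
      (μ[f | MeasurableSpace.comap X inferInstance]) ω
        = (μ[f | MeasurableSpace.comap X inferInstance]) ω0 :=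
    fun ω hω => comap_measurable_constant hhm ((show X ω = x from hω).trans hω0x.symm)
  set c := (μ[f | MeasurableSpace.comap X inferInstance]) ω0 with hc
  have h1 : ∫ ω in S, (μ[f | MeasurableSpace.comap X inferInstance]) ω ∂μ
      = c * (μ S).toReal := by
    rw [setIntegral_congr_fun hSm (fun ω hω => hconst ω (hS hω))]
    rw [setIntegral_const, smul_eq_mul, mul_comm, Measure.real]
  have h2 : ∫ ω in {ω | X ω = x}, (μ[f | MeasurableSpace.comap X inferInstance]) ω ∂μ
      = c * (μ {ω | X ω = x}).toReal := by
    rw [setIntegral_congr_fun hSxm hconst]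
    rw [setIntegral_const, smul_eq_mul, mul_comm, Measure.real]
  have h3 : ∫ ω in {ω | X ω = x}, (μ[f | MeasurableSpace.comap X inferInstance]) ω ∂μ
      = ∫ ω in {ω | X ω = x}, f ω ∂μ := setIntegral_condExp hmX hf hSx
  unfold condMeanOn
  rw [h1, ← h3, h2]
  have hSfin : (μ S).toReal ≠ 0 :=
    ENNReal.toReal_ne_zero.mpr ⟨hSne, measure_ne_top μ S⟩
  have hxfin : (μ {ω | X ω = x}).toReal ≠ 0 :=
    ENNReal.toReal_ne_zero.mpr ⟨hx, measure_ne_top μ _⟩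
  rw [mul_div_assoc, mul_div_assoc, div_self hSfin, div_self hxfin]

end Aux

end AuxLemmas

/-- conditional differential-effect identity: under consistency,
unconfoundedness given `(X, Z2, U)` and the exclusion restriction, for a fixed `x` whose
relevant cells have positive probability,
`μ1(x) := E[Y|Z1=1,Z2=0,X=x] − E[Y|Z1=0,Z2=1,X=x] = τ(x) + h(1,0,x) − h(0,1,x)`,
where `τ(x) = E[Y(1)−Y(0)|X=x]` and `h(a,b,x) = E[f_a(X,U)|Z1=a,Z2=b,X=x]` with
`f_a(X,U) = E[Y(a)|X,U] − E[Y(a)|X]`. -/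
theorem diffEffect_conditional_identity
    {Ω : Type*} [mΩ : MeasurableSpace Ω] [StandardBorelSpace Ω] [Nonempty Ω]
    (μ : Measure Ω) [IsProbabilityMeasure μ]
    (Z1 Z2 X U Y1 Y0 Y : Ω → ℝ) (x : ℝ)
    (hZ1 : Measurable Z1) (hZ2 : Measurable Z2) (hX : Measurable X) (hU : Measurable U)
    (hY1m : Measurable Y1) (hY0m : Measurable Y0)
    (hZ1bin : ∀ ω, Z1 ω = 0 ∨ Z1 ω = 1) (hZ2bin : ∀ ω, Z2 ω = 0 ∨ Z2 ω = 1)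
    (hY1int : Integrable Y1 μ) (hY0int : Integrable Y0 μ)
    -- consistency
    (hcons : ∀ ω, Y ω = Z1 ω * Y1 ω + (1 - Z1 ω) * Y0 ω)
    (hle : sigma3 Z2 X U ≤ mΩ)
    -- unconfoundedness: {Y(1), Y(0)} ⫫ Z1 | X, Z2, U
    (hunconf : CondIndepFun (sigma3 Z2 X U) hle (fun ω => (Y1 ω, Y0 ω)) Z1 μ)
    -- exclusion restriction for both potential outcomes
    (hexcl1 : μ[Y1 | sigma3 Z2 X U] =ᵐ[μ] μ[Y1 | sigma2 X U])
    (hexcl0 : μ[Y0 | sigma3 Z2 X U] =ᵐ[μ] μ[Y0 | sigma2 X U])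
    -- positive conditional cell probabilities at X = x
    (hx : 0 < μ {ω | X ω = x})
    (hA10 : 0 < μ {ω | Z1 ω = 1 ∧ Z2 ω = 0 ∧ X ω = x})
    (hA01 : 0 < μ {ω | Z1 ω = 0 ∧ Z2 ω = 1 ∧ X ω = x}) :
    condMeanOn μ {ω | Z1 ω = 1 ∧ Z2 ω = 0 ∧ X ω = x} Y
      - condMeanOn μ {ω | Z1 ω = 0 ∧ Z2 ω = 1 ∧ X ω = x} Y
      = condMeanOn μ {ω | X ω = x} (fun ω => Y1 ω - Y0 ω)
        + condMeanOn μ {ω | Z1 ω = 1 ∧ Z2 ω = 0 ∧ X ω = x}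
            (fun ω => (μ[Y1 | sigma2 X U]) ω
              - (μ[Y1 | MeasurableSpace.comap X inferInstance]) ω)
        - condMeanOn μ {ω | Z1 ω = 0 ∧ Z2 ω = 1 ∧ X ω = x}
            (fun ω => (μ[Y0 | sigma2 X U]) ω
              - (μ[Y0 | MeasurableSpace.comap X inferInstance]) ω) := by
  classical
  have hle2 : sigma2 X U ≤ sigma3 Z2 X U :=
    sup_le (le_trans le_sup_right le_sup_left) le_sup_right
  -- measurable sets
  have hSxm : MeasurableSet {ω | X ω = x} := hX (measurableSet_singleton x)
  have hA10m : MeasurableSet {ω | Z1 ω = 1 ∧ Z2 ω = 0 ∧ X ω = x} :=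
    (hZ1 (measurableSet_singleton 1)).inter
      ((hZ2 (measurableSet_singleton 0)).inter (hX (measurableSet_singleton x)))
  have hA01m : MeasurableSet {ω | Z1 ω = 0 ∧ Z2 ω = 1 ∧ X ω = x} :=
    (hZ1 (measurableSet_singleton 0)).inter
      ((hZ2 (measurableSet_singleton 1)).inter (hX (measurableSet_singleton x)))
  have hcomapZ2 : MeasurableSpace.comap Z2 inferInstance ≤ sigma3 Z2 X U :=
    le_trans le_sup_left le_sup_left
  have hcomapX3 : MeasurableSpace.comap X inferInstance ≤ sigma3 Z2 X U :=
    le_trans le_sup_right le_sup_left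
  have hB10σ : MeasurableSet[sigma3 Z2 X U] {ω | Z2 ω = 0 ∧ X ω = x} := by
    have h1 : MeasurableSet[sigma3 Z2 X U] {ω | Z2 ω = 0} :=
      hcomapZ2 _ ⟨{0}, measurableSet_singleton 0, rfl⟩
    have h2 : MeasurableSet[sigma3 Z2 X U] {ω | X ω = x} :=
      hcomapX3 _ ⟨{x}, measurableSet_singleton x, rfl⟩
    exact h1.inter h2
  have hB01σ : MeasurableSet[sigma3 Z2 X U] {ω | Z2 ω = 1 ∧ X ω = x} := by
    have h1 : MeasurableSet[sigma3 Z2 X U] {ω | Z2 ω = 1} :=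
      hcomapZ2 _ ⟨{1}, measurableSet_singleton 1, rfl⟩
    have h2 : MeasurableSet[sigma3 Z2 X U] {ω | X ω = x} :=
      hcomapX3 _ ⟨{x}, measurableSet_singleton x, rfl⟩
    exact h1.inter h2
  -- set decompositions
  have hA10eq : {ω | Z1 ω = 1 ∧ Z2 ω = 0 ∧ X ω = x}
      = {ω | Z2 ω = 0 ∧ X ω = x} ∩ {ω | Z1 ω = 1} := by
    ext ω; simp only [Set.mem_setOf_eq, Set.mem_inter_iff]; tauto
  have hA01eq : {ω | Z1 ω = 0 ∧ Z2 ω = 1 ∧ X ω = x}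
      = {ω | Z2 ω = 1 ∧ X ω = x} ∩ {ω | (fun ω => 1 - Z1 ω) ω = 1} := by
    ext ω
    simp only [Set.mem_setOf_eq, Set.mem_inter_iff, sub_eq_self]
    tauto
  -- conditional independence for each potential outcome
  have hind1 : CondIndepFun (sigma3 Z2 X U) hle Y1 Z1 μ :=
    hunconf.comp measurable_fst measurable_id
  have hind0 : CondIndepFun (sigma3 Z2 X U) hle Y0 (fun ω => 1 - Z1 ω) μ :=
    hunconf.comp measurable_snd (measurable_const.sub measurable_id)
  have hW0bin : ∀ ω, (fun ω => 1 - Z1 ω) ω = 0 ∨ (fun ω => 1 - Z1 ω) ω = 1 := by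
    intro ω; rcases hZ1bin ω with h | h <;> simp [h]
  -- cell identities
  have hcell1 : ∫ ω in {ω | Z2 ω = 0 ∧ X ω = x} ∩ {ω | Z1 ω = 1}, Y1 ω ∂μ
      = ∫ ω in {ω | Z2 ω = 0 ∧ X ω = x} ∩ {ω | Z1 ω = 1}, (μ[Y1 | sigma2 X U]) ω ∂μ :=
    cell_integral_eq hY1m hZ1 hZ1bin hY1int hind1 hexcl1 hB10σ
  have hcell0 : ∫ ω in {ω | Z2 ω = 1 ∧ X ω = x} ∩ {ω | (fun ω => 1 - Z1 ω) ω = 1}, Y0 ω ∂μ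
      = ∫ ω in {ω | Z2 ω = 1 ∧ X ω = x} ∩ {ω | (fun ω => 1 - Z1 ω) ω = 1},
          (μ[Y0 | sigma2 X U]) ω ∂μ :=
    cell_integral_eq hY0m (measurable_const.sub hZ1) hW0bin hY0int hind0 hexcl0 hB01σ
  -- replace Y by the potential outcomes on each cell
  have hnum1 : ∫ ω in {ω | Z1 ω = 1 ∧ Z2 ω = 0 ∧ X ω = x}, Y ω ∂μ
      = ∫ ω in {ω | Z1 ω = 1 ∧ Z2 ω = 0 ∧ X ω = x}, (μ[Y1 | sigma2 X U]) ω ∂μ := by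
    have hYeq : ∀ ω ∈ {ω | Z1 ω = 1 ∧ Z2 ω = 0 ∧ X ω = x}, Y ω = Y1 ω := by
      intro ω hω; rw [hcons ω, hω.1]; ring
    rw [setIntegral_congr_fun hA10m hYeq, hA10eq]
    exact hcell1
  have hnum0 : ∫ ω in {ω | Z1 ω = 0 ∧ Z2 ω = 1 ∧ X ω = x}, Y ω ∂μ
      = ∫ ω in {ω | Z1 ω = 0 ∧ Z2 ω = 1 ∧ X ω = x}, (μ[Y0 | sigma2 X U]) ω ∂μ := by
    have hYeq : ∀ ω ∈ {ω | Z1 ω = 0 ∧ Z2 ω = 1 ∧ X ω = x}, Y ω = Y0 ω := by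
      intro ω hω; rw [hcons ω, hω.1]; ring
    rw [setIntegral_congr_fun hA01m hYeq, hA01eq]
    exact hcell0
  -- conditional means
  have e1 : condMeanOn μ {ω | Z1 ω = 1 ∧ Z2 ω = 0 ∧ X ω = x} Y
      = condMeanOn μ {ω | Z1 ω = 1 ∧ Z2 ω = 0 ∧ X ω = x} (μ[Y1 | sigma2 X U]) := by
    unfold condMeanOn; rw [hnum1]
  have e0 : condMeanOn μ {ω | Z1 ω = 0 ∧ Z2 ω = 1 ∧ X ω = x} Y
      = condMeanOn μ {ω | Z1 ω = 0 ∧ Z2 ω = 1 ∧ X ω = x} (μ[Y0 | sigma2 X U]) := by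
    unfold condMeanOn; rw [hnum0]
  have e2 : condMeanOn μ {ω | Z1 ω = 1 ∧ Z2 ω = 0 ∧ X ω = x}
        (fun ω => (μ[Y1 | sigma2 X U]) ω
          - (μ[Y1 | MeasurableSpace.comap X inferInstance]) ω)
      = condMeanOn μ {ω | Z1 ω = 1 ∧ Z2 ω = 0 ∧ X ω = x} (μ[Y1 | sigma2 X U])
        - condMeanOn μ {ω | X ω = x} Y1 := by
    rw [condMeanOn_sub integrable_condExp.integrableOn integrable_condExp.integrableOn,
      condMeanOn_condexp_comap hX hY1int hx.ne' (fun ω hω => hω.2.2) hA10m hA10.ne']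
  have e3 : condMeanOn μ {ω | Z1 ω = 0 ∧ Z2 ω = 1 ∧ X ω = x}
        (fun ω => (μ[Y0 | sigma2 X U]) ω
          - (μ[Y0 | MeasurableSpace.comap X inferInstance]) ω)
      = condMeanOn μ {ω | Z1 ω = 0 ∧ Z2 ω = 1 ∧ X ω = x} (μ[Y0 | sigma2 X U])
        - condMeanOn μ {ω | X ω = x} Y0 := by
    rw [condMeanOn_sub integrable_condExp.integrableOn integrable_condExp.integrableOn,
      condMeanOn_condexp_comap hX hY0int hx.ne' (fun ω hω => hω.2.2) hA01m hA01.ne']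
  have e4 : condMeanOn μ {ω | X ω = x} (fun ω => Y1 ω - Y0 ω)
      = condMeanOn μ {ω | X ω = x} Y1 - condMeanOn μ {ω | X ω = x} Y0 :=
    condMeanOn_sub hY1int.integrableOn hY0int.integrableOn
  rw [e1, e0, e2, e3, e4]
  ring
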